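/- Write X_k = [A_1 ⊗ ⋯ ⊗ A_k, A] with each A_i = A = 1, and let 1 ≤ p ≤ k. Then there is an allowable Kelly–Mac Lane morphism θ_p : [A_1 ⊗ ⋯ ⊗ A_{p−1} ⊗ A_{p+1} ⊗ ⋯ ⊗ A_k, I] → X_k whose graph pairs A with A_p and pairs each A_i (i ≠ p) in the domain with A_i in the codomain. -/

import Mathlib

namespace KM

/-! ### Shapes and variable sets (Kelly–Mac Lane) -/

/-- Shapes: formal objects built from `1`, `I`, `⊗` and `[ , ]`. -/
inductive Shape : Type where
  | unit : Shape                     -- I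
  | one : Shape                      -- 1
  | tensor : Shape → Shape → Shape   -- ⊗
  | hom : Shape → Shape → Shape      -- [ , ]

/-- The variable set of a shape, as a list of signs (`true` = `+`, `false` = `−`). -/
def vset : Shape → List Bool
  | .unit => []
  | .one => [true]
  | .tensor T S => vset T ++ vset S
  | .hom T S => (vset T).map not ++ vset S

/-- `1 ⊗ ⋯ ⊗ 1` (m copies), with `1^{⊗0} = I`. -/
def onePow : ℕ → Shape
  | 0 => .unit
  | n + 1 => .tensor (onePow n) .one

/-- `X_m = [1^{⊗m}, 1]`. -/
def Xm (m : ℕ) : Shape := .hom (onePow m) .one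

/-- The type of variables (occurrences of `1`) of a shape. -/
def VarsOf : Shape → Type
  | .unit => Empty
  | .one => Unit
  | .tensor T S => VarsOf T ⊕ VarsOf S
  | .hom T S => VarsOf T ⊕ VarsOf S

/-- The variance (sign) of a variable of a shape. -/
def sgn : (T : Shape) → VarsOf T → Bool
  | .unit, x => x.elim
  | .one, _ => true
  | .tensor T S, x => Sum.elim (sgn T) (sgn S) x
  | .hom T S, x => Sum.elim (fun v => ! sgn T v) (sgn S) x

/-- The variance of a variable in the twisted sum `v(T)^op ++ v(S)`. -/
def tsgn (T S : Shape) (x : VarsOf T ⊕ VarsOf S) : Bool :=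
  Sum.elim (fun v => ! sgn T v) (sgn S) x

/-- A Kelly–Mac Lane graph `T → S`: a fixed-point free pairing (involution)
of the variables in the twisted sum `v(T)^op ++ v(S)` matching `+`'s with `−`'s. -/
structure KMGraph (T S : Shape) : Type where
  mate : VarsOf T ⊕ VarsOf S → VarsOf T ⊕ VarsOf S
  invol : ∀ x, mate (mate x) = x
  nofix : ∀ x, mate x ≠ x
  sflip : ∀ x, tsgn T S (mate x) = ! tsgn T S x

/-- The identity graph `1 : T → T`. -/
def idG (T : Shape) : KMGraph T T where
  mate := Sum.elim Sum.inr Sum.inl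
  invol := by rintro (v | v) <;> rfl
  nofix := by rintro (v | v) h <;> cases h
  sflip := by rintro (v | v) <;> simp [tsgn]

/-- Associativity `a : (T ⊗ S) ⊗ R → T ⊗ (S ⊗ R)`. -/
def aG (T S R : Shape) : KMGraph (.tensor (.tensor T S) R) (.tensor T (.tensor S R)) where
  mate := fun x => match x with
    | .inl (.inl (.inl t)) => .inr (.inl t)
    | .inl (.inl (.inr s)) => .inr (.inr (.inl s))
    | .inl (.inr r) => .inr (.inr (.inr r))
    | .inr (.inl t) => .inl (.inl (.inl t))
    | .inr (.inr (.inl s)) => .inl (.inl (.inr s))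
    | .inr (.inr (.inr r)) => .inl (.inr r)
  invol := by rintro (((t | s) | r) | (t | (s | r))) <;> rfl
  nofix := by rintro (((t | s) | r) | (t | (s | r))) h <;> cases h
  sflip := by rintro (((t | s) | r) | (t | (s | r))) <;> simp [tsgn, sgn, Sum.elim]

/-- Inverse associativity `a⁻¹ : T ⊗ (S ⊗ R) → (T ⊗ S) ⊗ R`. -/
def aInvG (T S R : Shape) : KMGraph (.tensor T (.tensor S R)) (.tensor (.tensor T S) R) where
  mate := fun x => match x with
    | .inl (.inl t) => .inr (.inl (.inl t))
    | .inl (.inr (.inl s)) => .inr (.inl (.inr s))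
    | .inl (.inr (.inr r)) => .inr (.inr r)
    | .inr (.inl (.inl t)) => .inl (.inl t)
    | .inr (.inl (.inr s)) => .inl (.inr (.inl s))
    | .inr (.inr r) => .inl (.inr (.inr r))
  invol := by rintro ((t | (s | r)) | ((t | s) | r)) <;> rfl
  nofix := by rintro ((t | (s | r)) | ((t | s) | r)) h <;> cases h
  sflip := by rintro ((t | (s | r)) | ((t | s) | r)) <;> simp [tsgn, sgn, Sum.elim]

/-- Unit `b : T ⊗ I → T`. -/
def bG (T : Shape) : KMGraph (.tensor T .unit) T where
  mate := fun x => match x with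
    | .inl (.inl t) => .inr t
    | .inl (.inr e) => e.elim
    | .inr t => .inl (.inl t)
  invol := by rintro ((t | e) | t) <;> first | exact e.elim | rfl
  nofix := by rintro ((t | e) | t) h <;> first | exact e.elim | simp at h
  sflip := by rintro ((t | e) | t) <;> first | exact e.elim | simp [tsgn, sgn, Sum.elim]

/-- Inverse unit `b⁻¹ : T → T ⊗ I`. -/
def bInvG (T : Shape) : KMGraph T (.tensor T .unit) where
  mate := fun x => match x with
    | .inl t => .inr (.inl t)
    | .inr (.inl t) => .inl t
    | .inr (.inr e) => e.elim
  invol := by rintro (t | (t | e)) <;> first | exact e.elim | rfl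
  nofix := by rintro (t | (t | e)) h <;> first | exact e.elim | simp at h
  sflip := by rintro (t | (t | e)) <;> first | exact e.elim | simp [tsgn, sgn, Sum.elim]

/-- Symmetry `c : T ⊗ S → S ⊗ T`. -/
def cG (T S : Shape) : KMGraph (.tensor T S) (.tensor S T) where
  mate := fun x => match x with
    | .inl (.inl t) => .inr (.inr t)
    | .inl (.inr s) => .inr (.inl s)
    | .inr (.inl s) => .inl (.inr s)
    | .inr (.inr t) => .inl (.inl t)
  invol := by rintro ((t | s) | (s | t)) <;> rfl
  nofix := by rintro ((t | s) | (s | t)) h <;> cases h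
  sflip := by rintro ((t | s) | (s | t)) <;> simp [tsgn, sgn, Sum.elim]

/-- `d : T → [S, T ⊗ S]`. -/
def dG (T S : Shape) : KMGraph T (.hom S (.tensor T S)) where
  mate := fun x => match x with
    | .inl t => .inr (.inr (.inl t))
    | .inr (.inl s) => .inr (.inr (.inr s))
    | .inr (.inr (.inl t)) => .inl t
    | .inr (.inr (.inr s)) => .inr (.inl s)
  invol := by rintro (t | (s | (t | s))) <;> rfl
  nofix := by rintro (t | (s | (t | s))) h <;> cases h
  sflip := by rintro (t | (s | (t | s))) <;> simp [tsgn, sgn, Sum.elim]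

/-- `e : [T, S] ⊗ T → S`. -/
def eG (T S : Shape) : KMGraph (.tensor (.hom T S) T) S where
  mate := fun x => match x with
    | .inl (.inl (.inl t)) => .inl (.inr t)
    | .inl (.inl (.inr s)) => .inr s
    | .inl (.inr t) => .inl (.inl (.inl t))
    | .inr s => .inl (.inl (.inr s))
  invol := by rintro (((t | s) | t) | s) <;> rfl
  nofix := by rintro (((t | s) | t) | s) h <;> cases h
  sflip := by rintro (((t | s) | t) | s) <;> simp [tsgn, sgn, Sum.elim]


section TensorHom
variable {T T' S S' : Shape}

/-- relabelling of the variables of `f : T → T'` into those of `T ⊗ S → T' ⊗ S'`. -/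
def rlf (T T' S S' : Shape) : VarsOf T ⊕ VarsOf T' → VarsOf (.tensor T S) ⊕ VarsOf (.tensor T' S') :=
  Sum.elim (fun a => .inl (.inl a)) (fun a => .inr (.inl a))

/-- relabelling of the variables of `g : S → S'` into those of `T ⊗ S → T' ⊗ S'`. -/
def rlg (T T' S S' : Shape) : VarsOf S ⊕ VarsOf S' → VarsOf (.tensor T S) ⊕ VarsOf (.tensor T' S') :=
  Sum.elim (fun a => .inl (.inr a)) (fun a => .inr (.inr a))

def tmate (f : KMGraph T T') (g : KMGraph S S') :
    VarsOf (.tensor T S) ⊕ VarsOf (.tensor T' S') → VarsOf (.tensor T S) ⊕ VarsOf (.tensor T' S')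
  | .inl (.inl t) => rlf T T' S S' (f.mate (.inl t))
  | .inl (.inr s) => rlg T T' S S' (g.mate (.inl s))
  | .inr (.inl t') => rlf T T' S S' (f.mate (.inr t'))
  | .inr (.inr s') => rlg T T' S S' (g.mate (.inr s'))

lemma tmate_rlf (f : KMGraph T T') (g : KMGraph S S') (z : VarsOf T ⊕ VarsOf T') :
    tmate f g (rlf T T' S S' z) = rlf T T' S S' (f.mate z) := by cases z <;> rfl

lemma tmate_rlg (f : KMGraph T T') (g : KMGraph S S') (z : VarsOf S ⊕ VarsOf S') :
    tmate f g (rlg T T' S S' z) = rlg T T' S S' (g.mate z) := by cases z <;> rfl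

lemma rlf_inj : Function.Injective (rlf T T' S S') := by
  rintro (a | a) (b | b) h <;> simp only [rlf, Sum.elim] at h <;> (try injection h with h) <;> (try injection h with h) <;> (try cases h) <;> rfl

lemma rlg_inj : Function.Injective (rlg T T' S S') := by
  rintro (a | a) (b | b) h <;> simp only [rlg, Sum.elim] at h <;> (try injection h with h) <;> (try injection h with h) <;> (try cases h) <;> rfl

lemma tsgn_rlf (z : VarsOf T ⊕ VarsOf T') :
    tsgn (.tensor T S) (.tensor T' S') (rlf T T' S S' z) = tsgn T T' z := by
  cases z <;> rfl

lemma tsgn_rlg (z : VarsOf S ⊕ VarsOf S') :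
    tsgn (.tensor T S) (.tensor T' S') (rlg T T' S S' z) = tsgn S S' z := by
  cases z <;> rfl

/-- Tensor product of graphs `f ⊗ g : T ⊗ S → T' ⊗ S'`. -/
def tensorG (f : KMGraph T T') (g : KMGraph S S') : KMGraph (.tensor T S) (.tensor T' S') where
  mate := tmate f g
  invol := by
    rintro ((t | s) | (t' | s'))
    · show tmate f g (rlf T T' S S' (f.mate (.inl t))) = _
      rw [tmate_rlf, f.invol]; rfl
    · show tmate f g (rlg T T' S S' (g.mate (.inl s))) = _
      rw [tmate_rlg, g.invol]; rfl
    · show tmate f g (rlf T T' S S' (f.mate (.inr t'))) = _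
      rw [tmate_rlf, f.invol]; rfl
    · show tmate f g (rlg T T' S S' (g.mate (.inr s'))) = _
      rw [tmate_rlg, g.invol]; rfl
  nofix := by
    rintro ((t | s) | (t' | s')) h
    · exact f.nofix (.inl t) (rlf_inj h)
    · exact g.nofix (.inl s) (rlg_inj h)
    · exact f.nofix (.inr t') (rlf_inj h)
    · exact g.nofix (.inr s') (rlg_inj h)
  sflip := by
    rintro ((t | s) | (t' | s'))
    · show tsgn _ _ (rlf T T' S S' (f.mate (.inl t))) = _
      rw [tsgn_rlf, f.sflip]; rfl
    · show tsgn _ _ (rlg T T' S S' (g.mate (.inl s))) = _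
      rw [tsgn_rlg, g.sflip]; rfl
    · show tsgn _ _ (rlf T T' S S' (f.mate (.inr t'))) = _
      rw [tsgn_rlf, f.sflip]; rfl
    · show tsgn _ _ (rlg T T' S S' (g.mate (.inr s'))) = _
      rw [tsgn_rlg, g.sflip]; rfl

/-- relabelling of the variables of `f : T → T'` into those of `[T', S] → [T, S']`. -/
def hlf (T T' S S' : Shape) : VarsOf T ⊕ VarsOf T' → VarsOf (.hom T' S) ⊕ VarsOf (.hom T S') :=
  Sum.elim (fun a => .inr (.inl a)) (fun a => .inl (.inl a))

/-- relabelling of the variables of `g : S → S'` into those of `[T', S] → [T, S']`. -/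
def hlg (T T' S S' : Shape) : VarsOf S ⊕ VarsOf S' → VarsOf (.hom T' S) ⊕ VarsOf (.hom T S') :=
  Sum.elim (fun a => .inl (.inr a)) (fun a => .inr (.inr a))

def hmate (f : KMGraph T T') (g : KMGraph S S') :
    VarsOf (.hom T' S) ⊕ VarsOf (.hom T S') → VarsOf (.hom T' S) ⊕ VarsOf (.hom T S')
  | .inl (.inl t') => hlf T T' S S' (f.mate (.inr t'))
  | .inl (.inr s) => hlg T T' S S' (g.mate (.inl s))
  | .inr (.inl t) => hlf T T' S S' (f.mate (.inl t))
  | .inr (.inr s') => hlg T T' S S' (g.mate (.inr s'))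

lemma hmate_hlf (f : KMGraph T T') (g : KMGraph S S') (z : VarsOf T ⊕ VarsOf T') :
    hmate f g (hlf T T' S S' z) = hlf T T' S S' (f.mate z) := by cases z <;> rfl

lemma hmate_hlg (f : KMGraph T T') (g : KMGraph S S') (z : VarsOf S ⊕ VarsOf S') :
    hmate f g (hlg T T' S S' z) = hlg T T' S S' (g.mate z) := by cases z <;> rfl

lemma hlf_inj : Function.Injective (hlf T T' S S') := by
  rintro (a | a) (b | b) h <;> simp only [hlf, Sum.elim] at h <;> (try injection h with h) <;> (try injection h with h) <;> (try cases h) <;> rfl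

lemma hlg_inj : Function.Injective (hlg T T' S S') := by
  rintro (a | a) (b | b) h <;> simp only [hlg, Sum.elim] at h <;> (try injection h with h) <;> (try injection h with h) <;> (try cases h) <;> rfl

lemma tsgn_hlf (z : VarsOf T ⊕ VarsOf T') :
    tsgn (.hom T' S) (.hom T S') (hlf T T' S S' z) = tsgn T T' z := by
  cases z <;> simp [tsgn, sgn, hlf, Sum.elim]

lemma tsgn_hlg (z : VarsOf S ⊕ VarsOf S') :
    tsgn (.hom T' S) (.hom T S') (hlg T T' S S' z) = tsgn S S' z := by
  cases z <;> simp [tsgn, sgn, hlg, Sum.elim]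

/-- `[f, g] : [T', S] → [T, S']` for graphs `f : T → T'`, `g : S → S'`. -/
def homG (f : KMGraph T T') (g : KMGraph S S') : KMGraph (.hom T' S) (.hom T S') where
  mate := hmate f g
  invol := by
    rintro ((t' | s) | (t | s'))
    · show hmate f g (hlf T T' S S' (f.mate (.inr t'))) = _
      rw [hmate_hlf, f.invol]; rfl
    · show hmate f g (hlg T T' S S' (g.mate (.inl s))) = _
      rw [hmate_hlg, g.invol]; rfl
    · show hmate f g (hlf T T' S S' (f.mate (.inl t))) = _
      rw [hmate_hlf, f.invol]; rfl
    · show hmate f g (hlg T T' S S' (g.mate (.inr s'))) = _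
      rw [hmate_hlg, g.invol]; rfl
  nofix := by
    rintro ((t' | s) | (t | s')) h
    · exact f.nofix (.inr t') (hlf_inj h)
    · exact g.nofix (.inl s) (hlg_inj h)
    · exact f.nofix (.inl t) (hlf_inj h)
    · exact g.nofix (.inr s') (hlg_inj h)
  sflip := by
    rintro ((t' | s) | (t | s'))
    · show tsgn _ _ (hlf T T' S S' (f.mate (.inr t'))) = _
      rw [tsgn_hlf, f.sflip]
      show _ = ! tsgn (.hom T' S) (.hom T S') (hlf T T' S S' (.inr t'))
      rw [tsgn_hlf]
    · show tsgn _ _ (hlg T T' S S' (g.mate (.inl s))) = _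
      rw [tsgn_hlg, g.sflip]
      show _ = ! tsgn (.hom T' S) (.hom T S') (hlg T T' S S' (.inl s))
      rw [tsgn_hlg]
    · show tsgn _ _ (hlf T T' S S' (f.mate (.inl t))) = _
      rw [tsgn_hlf, f.sflip]
      show _ = ! tsgn (.hom T' S) (.hom T S') (hlf T T' S S' (.inl t))
      rw [tsgn_hlf]
    · show tsgn _ _ (hlg T T' S S' (g.mate (.inr s'))) = _
      rw [tsgn_hlg, g.sflip]
      show _ = ! tsgn (.hom T' S) (.hom T S') (hlg T T' S S' (.inr s'))
      rw [tsgn_hlg]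

end TensorHom

/-! ### Composition of graphs, relationally -/

section Comp
variable (T S R : Shape)

/-- Inclusion of the variables of `T → S` into the variables of a composable pair. -/
def eTS : VarsOf T ⊕ VarsOf S → VarsOf T ⊕ VarsOf S ⊕ VarsOf R :=
  Sum.elim Sum.inl (fun s => Sum.inr (Sum.inl s))

def eSR : VarsOf S ⊕ VarsOf R → VarsOf T ⊕ VarsOf S ⊕ VarsOf R :=
  Sum.elim (fun s => Sum.inr (Sum.inl s)) (fun r => Sum.inr (Sum.inr r))

def eTR : VarsOf T ⊕ VarsOf R → VarsOf T ⊕ VarsOf S ⊕ VarsOf R :=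
  Sum.elim Sum.inl (fun r => Sum.inr (Sum.inr r))

variable {T S R}

/-- One step along the pairings of `f` or of `g`. -/
def Step (f : KMGraph T S) (g : KMGraph S R) (x y : VarsOf T ⊕ VarsOf S ⊕ VarsOf R) : Prop :=
  (∃ u, eTS T S R u = x ∧ eTS T S R (f.mate u) = y) ∨
  (∃ u, eSR T S R u = x ∧ eSR T S R (g.mate u) = y)

/-- Two variables are connected if they are joined by an alternating path. -/
def Connected (f : KMGraph T S) (g : KMGraph S R) :
    (VarsOf T ⊕ VarsOf S ⊕ VarsOf R) → (VarsOf T ⊕ VarsOf S ⊕ VarsOf R) → Prop :=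
  Relation.ReflTransGen (Step f g)

/-- `h` is the composite graph `g ∘ f`: it pairs `u` with `v` exactly when they are
joined by an alternating path through the variables of `S`. -/
def IsComposite (f : KMGraph T S) (g : KMGraph S R) (h : KMGraph T R) : Prop :=
  ∀ u, Connected f g (eTR T S R u) (eTR T S R (h.mate u))

/-- `f` and `g` are compatible: composing them gives no closed loops, i.e. every
variable of `S` is linked to a variable of `T` or `R`. -/
def Compatible (f : KMGraph T S) (g : KMGraph S R) : Prop :=
  ∀ s : VarsOf S, ∃ u, Connected f g (Sum.inr (Sum.inl s)) (eTR T S R u)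

end Comp

/-- The allowable morphisms: the smallest class of graphs containing `1, a, a⁻¹, b, b⁻¹, c, d, e`
and closed under `⊗`, `[ , ]` and composition. -/
inductive Allowable : {T S : Shape} → KMGraph T S → Prop
  | id (T : Shape) : Allowable (idG T)
  | assoc (T S R : Shape) : Allowable (aG T S R)
  | assocInv (T S R : Shape) : Allowable (aInvG T S R)
  | unit (T : Shape) : Allowable (bG T)
  | unitInv (T : Shape) : Allowable (bInvG T)
  | braid (T S : Shape) : Allowable (cG T S)
  | dgen (T S : Shape) : Allowable (dG T S)
  | egen (T S : Shape) : Allowable (eG T S)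
  | tensor {T T' S S' : Shape} {f : KMGraph T T'} {g : KMGraph S S'} :
      Allowable f → Allowable g → Allowable (tensorG f g)
  | homc {T T' S S' : Shape} {f : KMGraph T T'} {g : KMGraph S S'} :
      Allowable f → Allowable g → Allowable (homG f g)
  | comp {T S R : Shape} {f : KMGraph T S} {g : KMGraph S R} {h : KMGraph T R} :
      Allowable f → Allowable g → IsComposite f g h → Allowable h

/-! ### Trees -/

/-- The data of a (combed) tree with `k` ordered nodes of arities `m 0, …, m (k-1)` and
`l` leaves: a bijection from node-inputs plus a root marker to node-outputs plus leaf markers. -/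
abbrev TreeBij (k : ℕ) (m : Fin k → ℕ) (l : ℕ) : Type :=
  ((Σ i : Fin k, Fin (m i)) ⊕ Unit) ≃ (Fin k ⊕ Fin l)

/-- The loop condition: a nonempty cyclic sequence of node indices `t 0, …, t n` such that
the `b j`-th input of node `t j` is attached to the output of node `t (j-1)` (cyclically). -/
def HasLoop {k : ℕ} {m : Fin k → ℕ} {l : ℕ} (α : TreeBij k m l) : Prop :=
  ∃ (n : ℕ) (t : Fin (n + 1) → Fin k) (b : (j : Fin (n + 1)) → Fin (m (t j))),
    ∀ j, α (Sum.inl ⟨t j, b j⟩) = Sum.inl (t (j - 1))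

/-- A closed loop in the graph defined by `α` on the nodes `N_1, …, N_k`:
a closed walk along pairwise distinct edges.  An edge is a node input together with the node
output it is attached to under `α`; its endpoints are the two nodes involved. -/
def HasClosedLoop {k : ℕ} {m : Fin k → ℕ} {l : ℕ} (α : TreeBij k m l) : Prop :=
  ∃ (n : ℕ) (v : Fin (n + 1) → Fin k) (e : Fin (n + 1) → Σ i : Fin k, Fin (m i)),
    Function.Injective e ∧
    ∀ j, ((e j).1 = v j ∧ α (Sum.inl (e j)) = Sum.inl (v (j + 1))) ∨
         ((e j).1 = v (j + 1) ∧ α (Sum.inl (e j)) = Sum.inl (v j))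

/-! ### Trees as morphisms in K1 -/

/-- `X_{m 0} ⊗ ⋯ ⊗ X_{m (k-1)}` (associated to the right, with empty tensor `I`). -/
def domShape : (k : ℕ) → (Fin k → ℕ) → Shape
  | 0, _ => .unit
  | k + 1, m => .tensor (Xm (m 0)) (domShape k (fun i => m i.succ))

/-- The `j`-th variable of `1^{⊗m}`. -/
def powVar : (m : ℕ) → Fin m → VarsOf (onePow m)
  | 0, j => j.elim0
  | m + 1, j => Fin.lastCases (Sum.inr ()) (fun i => Sum.inl (powVar m i)) j

/-- The variable of `X_{m 0} ⊗ ⋯ ⊗ X_{m (k-1)}` corresponding to the `j`-th input of the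
`i`-th node. -/
def inputVar : (k : ℕ) → (m : Fin k → ℕ) → (i : Fin k) → Fin (m i) → VarsOf (domShape k m)
  | 0, _, i, _ => i.elim0
  | k + 1, m, i, j =>
    Fin.cases (motive := fun i => Fin (m i) → VarsOf (domShape (k + 1) m))
      (fun j => Sum.inl (Sum.inl (powVar (m 0) j)))
      (fun i' j => Sum.inr (inputVar k (fun t => m t.succ) i' j)) i j

/-- The variable of `X_{m 0} ⊗ ⋯ ⊗ X_{m (k-1)}` corresponding to the output of the
`i`-th node. -/
def outputVar : (k : ℕ) → (m : Fin k → ℕ) → Fin k → VarsOf (domShape k m)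
  | 0, _, i => i.elim0
  | k + 1, m, i =>
    Fin.cases (motive := fun _ => VarsOf (domShape (k + 1) m))
      (Sum.inl (Sum.inr ()))
      (fun i' => Sum.inr (outputVar k (fun t => m t.succ) i')) i

/-- The variable of `X_l` corresponding to the `p`-th leaf. -/
def leafVar (l : ℕ) (p : Fin l) : VarsOf (Xm l) := Sum.inl (powVar l p)

/-- The variable of `X_l` corresponding to the root. -/
def rootVar (l : ℕ) : VarsOf (Xm l) := Sum.inr ()

/-- Node inputs and the root marker, as variables of the graph
`X_{m 0} ⊗ ⋯ ⊗ X_{m (k-1)} → X_l`. -/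
def srcv (k : ℕ) (m : Fin k → ℕ) (l : ℕ) :
    ((Σ i : Fin k, Fin (m i)) ⊕ Unit) → VarsOf (domShape k m) ⊕ VarsOf (Xm l) :=
  Sum.elim (fun x => Sum.inl (inputVar k m x.1 x.2)) (fun _ => Sum.inr (rootVar l))

/-- Node outputs and leaf markers, as variables of the graph
`X_{m 0} ⊗ ⋯ ⊗ X_{m (k-1)} → X_l`. -/
def targ (k : ℕ) (m : Fin k → ℕ) (l : ℕ) :
    (Fin k ⊕ Fin l) → VarsOf (domShape k m) ⊕ VarsOf (Xm l) :=
  Sum.elim (fun r => Sum.inl (outputVar k m r)) (fun p => Sum.inr (leafVar l p))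

/-- The graph `ξ : X_{m 0} ⊗ ⋯ ⊗ X_{m (k-1)} → X_l` represents the tree (bijection) `α`:
its pairing sends each node input (resp. the root marker) exactly where `α` does. -/
def Represents {k : ℕ} {m : Fin k → ℕ} {l : ℕ}
    (ξ : KMGraph (domShape k m) (Xm l)) (α : TreeBij k m l) : Prop :=
  ∀ x, ξ.mate (srcv k m l x) = targ k m l (α x)

/-- Dual form: the graph `ξ : I → [X_{m 0} ⊗ ⋯ ⊗ X_{m (k-1)}, X_l]` represents the tree `α`. -/
def Represents' {k : ℕ} {m : Fin k → ℕ} {l : ℕ}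
    (ξ : KMGraph .unit (.hom (domShape k m) (Xm l))) (α : TreeBij k m l) : Prop :=
  ∀ x, ξ.mate (Sum.inr (srcv k m l x)) = Sum.inr (targ k m l (α x))




/-! ### Auxiliary machinery for Statement 12 -/

section Aux

/-- Shapes built from `I`, `1` and `⊗` only: all variables are covariant. -/
inductive PosShape : Shape → Prop
  | unit : PosShape .unit
  | one : PosShape .one
  | tensor {T S : Shape} : PosShape T → PosShape S → PosShape (.tensor T S)

lemma sgn_pos : ∀ {T : Shape}, PosShape T → ∀ v, sgn T v = true := by
  intro T h
  induction h with
  | unit => exact fun v => v.elim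
  | one => intro v; rfl
  | tensor h1 h2 ih1 ih2 => rintro (v | v); exacts [ih1 v, ih2 v]

lemma pos_onePow (n : ℕ) : PosShape (onePow n) := by
  induction n with
  | zero => exact .unit
  | succ n ih => exact .tensor ih .one

@[simp] lemma sgn_hom_inl (T S : Shape) (v : VarsOf T) : sgn (.hom T S) (.inl v) = !sgn T v := rfl

@[simp] lemma sgn_hom_inr (T S : Shape) (v : VarsOf S) : sgn (.hom T S) (.inr v) = sgn S v := rfl

@[simp] lemma sgn_one (v : VarsOf Shape.one) : sgn Shape.one v = true := rfl

@[simp] lemma sgn_unit_elim (v : VarsOf Shape.unit) (b : Bool) : sgn Shape.unit v = b := v.elim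

@[simp] lemma sgn_onePow (n : ℕ) (v : VarsOf (onePow n)) : sgn (onePow n) v = true :=
  sgn_pos (pos_onePow n) v

variable {T S R : Shape}

lemma mate_inl_inr (E : KMGraph T S) (hT : PosShape T) (hS : PosShape S) (v : VarsOf T) :
    ∃ w, E.mate (.inl v) = .inr w := by
  have h := E.sflip (.inl v)
  rcases hm : E.mate (.inl v) with w | w
  · rw [hm] at h
    simp [tsgn, sgn_pos hT] at h
  · exact ⟨w, rfl⟩

lemma mate_inr_inl (E : KMGraph T S) (hT : PosShape T) (hS : PosShape S) (w : VarsOf S) :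
    ∃ v, E.mate (.inr w) = .inl v := by
  have h := E.sflip (.inr w)
  rcases hm : E.mate (.inr w) with v | v
  · exact ⟨v, rfl⟩
  · rw [hm] at h
    simp [tsgn, sgn_pos hT, sgn_pos hS] at h

/-- The forward function of a graph between positive shapes. -/
noncomputable def fwdP (E : KMGraph T S) (hT : PosShape T) (hS : PosShape S)
    (v : VarsOf T) : VarsOf S :=
  (mate_inl_inr E hT hS v).choose

lemma fwdP_spec (E : KMGraph T S) (hT : PosShape T) (hS : PosShape S) (v : VarsOf T) :
    E.mate (.inl v) = .inr (fwdP E hT hS v) :=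
  (mate_inl_inr E hT hS v).choose_spec

/-- The backward function of a graph between positive shapes. -/
noncomputable def bwdP (E : KMGraph T S) (hT : PosShape T) (hS : PosShape S)
    (w : VarsOf S) : VarsOf T :=
  (mate_inr_inl E hT hS w).choose

lemma bwdP_spec (E : KMGraph T S) (hT : PosShape T) (hS : PosShape S) (w : VarsOf S) :
    E.mate (.inr w) = .inl (bwdP E hT hS w) :=
  (mate_inr_inl E hT hS w).choose_spec

lemma fwdP_eq (E : KMGraph T S) (hT : PosShape T) (hS : PosShape S) {v : VarsOf T}
    {w : VarsOf S} (h : E.mate (.inl v) = .inr w) : fwdP E hT hS v = w := by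
  have := fwdP_spec E hT hS v
  rw [h] at this
  exact (Sum.inr.inj this).symm

lemma bwdP_eq (E : KMGraph T S) (hT : PosShape T) (hS : PosShape S) {v : VarsOf T}
    {w : VarsOf S} (h : E.mate (.inl v) = .inr w) : bwdP E hT hS w = v := by
  have h2 := E.invol (.inl v)
  rw [h, bwdP_spec E hT hS w] at h2
  exact Sum.inl.inj h2

lemma bwdP_fwdP (E : KMGraph T S) (hT : PosShape T) (hS : PosShape S) (v : VarsOf T) :
    bwdP E hT hS (fwdP E hT hS v) = v :=
  bwdP_eq E hT hS (fwdP_spec E hT hS v)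

lemma fwdP_bwdP (E : KMGraph T S) (hT : PosShape T) (hS : PosShape S) (w : VarsOf S) :
    fwdP E hT hS (bwdP E hT hS w) = w := by
  have h2 := E.invol (.inr w)
  rw [bwdP_spec E hT hS w, fwdP_spec E hT hS (bwdP E hT hS w)] at h2
  exact Sum.inr.inj h2

/-- Composite of two graphs between positive shapes. -/
noncomputable def compPos (E1 : KMGraph T S) (E2 : KMGraph S R)
    (hT : PosShape T) (hS : PosShape S) (hR : PosShape R) : KMGraph T R where
  mate := Sum.elim (fun v => .inr (fwdP E2 hS hR (fwdP E1 hT hS v)))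
    (fun w => .inl (bwdP E1 hT hS (bwdP E2 hS hR w)))
  invol := by
    rintro (v | w) <;>
      simp [bwdP_fwdP, fwdP_bwdP]
  nofix := by rintro (v | w) h <;> simp at h
  sflip := by rintro (v | w) <;> simp [tsgn, sgn_pos hT, sgn_pos hR]

lemma isComposite_compPos (E1 : KMGraph T S) (E2 : KMGraph S R)
    (hT : PosShape T) (hS : PosShape S) (hR : PosShape R) :
    IsComposite E1 E2 (compPos E1 E2 hT hS hR) := by
  rintro (v | w)
  · refine .head (Or.inl ⟨.inl v, rfl, rfl⟩) ?_
    rw [fwdP_spec E1 hT hS v]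
    refine .head (Or.inr ⟨.inl (fwdP E1 hT hS v), rfl, rfl⟩) ?_
    rw [fwdP_spec E2 hS hR]
    exact .refl
  · refine .head (Or.inr ⟨.inr w, rfl, rfl⟩) ?_
    rw [bwdP_spec E2 hS hR w]
    refine .head (Or.inl ⟨.inr (bwdP E2 hS hR w), rfl, rfl⟩) ?_
    rw [bwdP_spec E1 hT hS]
    exact .refl

lemma allowable_compPos {E1 : KMGraph T S} {E2 : KMGraph S R}
    (h1 : Allowable E1) (h2 : Allowable E2)
    (hT : PosShape T) (hS : PosShape S) (hR : PosShape R) :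
    Allowable (compPos E1 E2 hT hS hR) :=
  .comp h1 h2 (isComposite_compPos E1 E2 hT hS hR)

lemma compPos_mate_inl {E1 : KMGraph T S} {E2 : KMGraph S R}
    (hT : PosShape T) (hS : PosShape S) (hR : PosShape R)
    {v : VarsOf T} {w : VarsOf S} {x : VarsOf R}
    (h1 : E1.mate (.inl v) = .inr w) (h2 : E2.mate (.inl w) = .inr x) :
    (compPos E1 E2 hT hS hR).mate (.inl v) = .inr x := by
  show Sum.inr (fwdP E2 hS hR (fwdP E1 hT hS v)) = _
  rw [fwdP_eq E1 hT hS h1, fwdP_eq E2 hS hR h2]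

@[simp] lemma powVar_castSucc (n : ℕ) (i : Fin n) :
    powVar (n + 1) i.castSucc = Sum.inl (powVar n i) := by
  exact Fin.lastCases_castSucc (motive := fun _ => VarsOf (onePow (n + 1))) i

@[simp] lemma powVar_last (n : ℕ) : powVar (n + 1) (Fin.last n) = Sum.inr () := by
  exact Fin.lastCases_last (motive := fun _ => VarsOf (onePow (n + 1)))

/-- The allowable graph swapping the two topmost `1`'s of `1^{⊗(m+2)}`. -/
lemma swapTop_exists (m : ℕ) :
    ∃ W : KMGraph (onePow (m + 2)) (onePow (m + 2)), Allowable W ∧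
      (∀ v : VarsOf (onePow m), W.mate (.inl (.inl (.inl v))) = .inr (.inl (.inl v))) ∧
      W.mate (.inl (.inl (.inr ()))) = .inr (.inr ()) ∧
      W.mate (.inl (.inr ())) = .inr (.inl (.inr ())) := by
  have hP : PosShape (onePow m) := pos_onePow m
  have hP2 : PosShape (onePow (m + 2)) := pos_onePow (m + 2)
  have hM : PosShape (.tensor (onePow m) (.tensor .one .one)) := .tensor hP (.tensor .one .one)
  refine ⟨compPos
      (compPos (aG (onePow m) .one .one) (tensorG (idG (onePow m)) (cG .one .one)) hP2 hM hM)
      (aInvG (onePow m) .one .one) hP2 hM hP2,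
    allowable_compPos
      (allowable_compPos (.assoc _ _ _) (.tensor (.id _) (.braid _ _)) hP2 hM hM)
      (.assocInv _ _ _) hP2 hM hP2, ?_, ?_, ?_⟩
  · intro v
    exact compPos_mate_inl hP2 hM hP2 (compPos_mate_inl hP2 hM hM rfl rfl) rfl
  · exact compPos_mate_inl hP2 hM hP2 (compPos_mate_inl hP2 hM hM rfl rfl) rfl
  · exact compPos_mate_inl hP2 hM hP2 (compPos_mate_inl hP2 hM hM rfl rfl) rfl

/-- Moving the `p`-th `1` of `1^{⊗(n+1)}` to the last position, by an allowable graph. -/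
lemma moveToLast (n : ℕ) (p : Fin (n + 1)) :
    ∃ E : KMGraph (onePow (n + 1)) (onePow (n + 1)), Allowable E ∧
      E.mate (.inl (powVar (n + 1) p)) = .inr (powVar (n + 1) (Fin.last n)) ∧
      ∀ i : Fin n, E.mate (.inl (powVar (n + 1) (p.succAbove i)))
        = .inr (powVar (n + 1) i.castSucc) := by
  induction n with
  | zero =>
    refine ⟨idG _, .id _, ?_, fun i => i.elim0⟩
    have : p = Fin.last 0 := Fin.ext (by omega)
    subst this; rfl
  | succ n ih =>
    induction p using Fin.lastCases with
    | last =>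
      refine ⟨idG _, .id _, rfl, fun i => ?_⟩
      rw [Fin.succAbove_last]
      rfl
    | cast q =>
      obtain ⟨E', hA, hp, hi⟩ := ih q
      obtain ⟨W, hWA, hW1, hW2, hW3⟩ := swapTop_exists n
      have hP2 : PosShape (onePow (n + 2)) := pos_onePow (n + 2)
      refine ⟨compPos (tensorG E' (idG .one)) W hP2 hP2 hP2,
        allowable_compPos (.tensor hA (.id _)) hWA hP2 hP2 hP2, ?_, ?_⟩
      · simp only [powVar_castSucc, powVar_last]
        refine compPos_mate_inl (w := Sum.inl (Sum.inr ())) hP2 hP2 hP2 ?_ ?_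
        · show rlf _ _ _ _ (E'.mate (.inl (powVar (n + 1) q))) = _
          rw [hp, powVar_last]
          rfl
        · exact hW2
      · intro i
        induction i using Fin.lastCases with
        | last =>
          rw [Fin.succAbove_castSucc_of_le q (Fin.last n) (Fin.le_last q), Fin.succ_last]
          simp only [powVar_castSucc, powVar_last]
          exact compPos_mate_inl (w := Sum.inr ()) hP2 hP2 hP2 rfl hW3
        | cast i' =>
          rw [Fin.castSucc_succAbove_castSucc]
          simp only [powVar_castSucc]
          refine compPos_mate_inl (w := Sum.inl (Sum.inl (powVar n i'))) hP2 hP2 hP2 ?_ ?_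
          · show rlf _ _ _ _ (E'.mate (.inl (powVar (n + 1) (q.succAbove i')))) = _
            rw [hi i', powVar_castSucc]
            rfl
          · exact hW1 (powVar n i')

end Aux


section Theta

/-- The graph of the evaluation-style map `[Y,I] ⊗ (Y ⊗ 1) → I ⊗ 1`. -/
def h12G (Y : Shape) (hY : PosShape Y) :
    KMGraph (.tensor (.hom Y .unit) (.tensor Y .one)) (.tensor .unit .one) where
  mate
    | .inl (.inl (.inl v)) => .inl (.inr (.inl v))
    | .inl (.inl (.inr e)) => e.elim
    | .inl (.inr (.inl v)) => .inl (.inl (.inl v))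
    | .inl (.inr (.inr _)) => .inr (.inr ())
    | .inr (.inl e) => e.elim
    | .inr (.inr _) => .inl (.inr (.inr ()))
  invol := by rintro (((v | e) | (v | ⟨⟩)) | (e | ⟨⟩)) <;> first | exact e.elim | rfl
  nofix := by rintro (((v | e) | (v | ⟨⟩)) | (e | ⟨⟩)) h <;> first | exact e.elim | cases h
  sflip := by
    rintro (((v | e) | (v | ⟨⟩)) | (e | ⟨⟩)) <;>
      first | exact e.elim | simp [tsgn, sgn, sgn_pos hY, Sum.elim]

/-- The graph of the evaluation-style map `γ : [Y,I] ⊗ (Y ⊗ 1) → 1`. -/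
def gammaG (Y : Shape) (hY : PosShape Y) :
    KMGraph (.tensor (.hom Y .unit) (.tensor Y .one)) .one where
  mate
    | .inl (.inl (.inl v)) => .inl (.inr (.inl v))
    | .inl (.inl (.inr e)) => e.elim
    | .inl (.inr (.inl v)) => .inl (.inl (.inl v))
    | .inl (.inr (.inr _)) => .inr ()
    | .inr _ => .inl (.inr (.inr ()))
  invol := by rintro (((v | e) | (v | ⟨⟩)) | ⟨⟩) <;> first | exact e.elim | rfl
  nofix := by rintro (((v | e) | (v | ⟨⟩)) | ⟨⟩) h <;> first | exact e.elim | cases h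
  sflip := by
    rintro (((v | e) | (v | ⟨⟩)) | ⟨⟩) <;>
      first | exact e.elim | simp [tsgn, sgn, sgn_pos hY, Sum.elim]

/-- The graph of `θ_last : [Y, I] → [Y ⊗ 1, 1]`. -/
def thetaLastG (Y : Shape) (hY : PosShape Y) :
    KMGraph (.hom Y .unit) (.hom (.tensor Y .one) .one) where
  mate
    | .inl (.inl v) => .inr (.inl (.inl v))
    | .inl (.inr e) => e.elim
    | .inr (.inl (.inl v)) => .inl (.inl v)
    | .inr (.inl (.inr _)) => .inr (.inr ())
    | .inr (.inr _) => .inr (.inl (.inr ()))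
  invol := by rintro ((v | e) | ((v | ⟨⟩) | ⟨⟩)) <;> first | exact e.elim | rfl
  nofix := by rintro ((v | e) | ((v | ⟨⟩) | ⟨⟩)) h <;> first | exact e.elim | cases h
  sflip := by
    rintro ((v | e) | ((v | ⟨⟩) | ⟨⟩)) <;>
      first | exact e.elim | simp [tsgn, sgn, sgn_pos hY, Sum.elim]

lemma allowable_h12G (Y : Shape) (hY : PosShape Y) : Allowable (h12G Y hY) := by
  refine Allowable.comp (.assocInv (.hom Y .unit) Y .one)
    (.tensor (.egen Y .unit) (.id .one)) ?_
  rintro (((v | e) | (v | ⟨⟩)) | (e | ⟨⟩))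
  · exact .head (Or.inl ⟨.inl (.inl (.inl v)), rfl, rfl⟩)
      (.head (Or.inr ⟨.inl (.inl (.inl (.inl v))), rfl, rfl⟩)
        (.head (Or.inl ⟨.inr (.inl (.inr v)), rfl, rfl⟩) .refl))
  · exact e.elim
  · exact .head (Or.inl ⟨.inl (.inr (.inl v)), rfl, rfl⟩)
      (.head (Or.inr ⟨.inl (.inl (.inr v)), rfl, rfl⟩)
        (.head (Or.inl ⟨.inr (.inl (.inl (.inl v))), rfl, rfl⟩) .refl))
  · exact .head (Or.inl ⟨.inl (.inr (.inr ())), rfl, rfl⟩)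
      (.head (Or.inr ⟨.inl (.inr ()), rfl, rfl⟩) .refl)
  · exact e.elim
  · exact .head (Or.inr ⟨.inr (.inr ()), rfl, rfl⟩)
      (.head (Or.inl ⟨.inr (.inr ()), rfl, rfl⟩) .refl)

lemma allowable_gammaG (Y : Shape) (hY : PosShape Y) : Allowable (gammaG Y hY) := by
  have h1 : PosShape (.tensor .unit .one) := .tensor .unit .one
  have h2 : PosShape (.tensor .one .unit) := .tensor .one .unit
  set g3 := compPos (cG .unit .one) (bG .one) h1 h2 .one with hg3
  have hg1 : g3.mate (.inl (.inr ())) = .inr () :=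
    compPos_mate_inl (w := Sum.inl ()) h1 h2 .one rfl rfl
  have hg2 : g3.mate (.inr ()) = .inl (.inr ()) := by
    have h := g3.invol (.inl (.inr ()))
    rw [hg1] at h
    exact h
  refine Allowable.comp (allowable_h12G Y hY)
    (allowable_compPos (.braid .unit .one) (.unit .one) h1 h2 .one) ?_
  rintro (((v | e) | (v | ⟨⟩)) | ⟨⟩)
  · exact .head (Or.inl ⟨.inl (.inl (.inl v)), rfl, rfl⟩) .refl
  · exact e.elim
  · exact .head (Or.inl ⟨.inl (.inr (.inl v)), rfl, rfl⟩) .refl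
  · refine .head (Or.inl ⟨.inl (.inr (.inr ())), rfl, rfl⟩) ?_
    refine .head (Or.inr ⟨.inl (.inr ()), rfl, rfl⟩) ?_
    rw [hg1]
    exact .refl
  · refine .head (Or.inr ⟨.inr (), rfl, rfl⟩) ?_
    rw [hg2]
    exact .head (Or.inl ⟨.inr (.inr ()), rfl, rfl⟩) .refl

lemma allowable_thetaLastG (Y : Shape) (hY : PosShape Y) : Allowable (thetaLastG Y hY) := by
  refine Allowable.comp (.dgen (.hom Y .unit) (.tensor Y .one))
    (.homc (.id (.tensor Y .one)) (allowable_gammaG Y hY)) ?_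
  rintro ((v | e) | ((v | ⟨⟩) | ⟨⟩))
  · exact .head (Or.inl ⟨.inl (.inl v), rfl, rfl⟩)
      (.head (Or.inr ⟨.inl (.inr (.inl (.inl v))), rfl, rfl⟩)
        (.head (Or.inl ⟨.inr (.inr (.inr (.inl v))), rfl, rfl⟩)
          (.head (Or.inr ⟨.inl (.inl (.inl v)), rfl, rfl⟩) .refl)))
  · exact e.elim
  · exact .head (Or.inr ⟨.inr (.inl (.inl v)), rfl, rfl⟩)
      (.head (Or.inl ⟨.inr (.inl (.inl v)), rfl, rfl⟩)
        (.head (Or.inr ⟨.inl (.inr (.inr (.inl v))), rfl, rfl⟩)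
          (.head (Or.inl ⟨.inr (.inr (.inl (.inl v))), rfl, rfl⟩) .refl)))
  · exact .head (Or.inr ⟨.inr (.inl (.inr ())), rfl, rfl⟩)
      (.head (Or.inl ⟨.inr (.inl (.inr ())), rfl, rfl⟩)
        (.head (Or.inr ⟨.inl (.inr (.inr (.inr ()))), rfl, rfl⟩) .refl))
  · exact .head (Or.inr ⟨.inr (.inr ()), rfl, rfl⟩)
      (.head (Or.inl ⟨.inr (.inr (.inr (.inr ()))), rfl, rfl⟩)
        (.head (Or.inr ⟨.inl (.inl (.inr ())), rfl, rfl⟩) .refl))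

variable {k' : ℕ} (E : KMGraph (onePow (k' + 1)) (onePow (k' + 1)))

/-- The pairing of the graph `θ_p`. -/
noncomputable def thMate (E : KMGraph (onePow (k' + 1)) (onePow (k' + 1))) :
    (VarsOf (Shape.hom (onePow k') .unit) ⊕ VarsOf (Xm (k' + 1))) →
      (VarsOf (Shape.hom (onePow k') .unit) ⊕ VarsOf (Xm (k' + 1)))
  | .inl (.inl w) =>
      .inr (.inl (bwdP E (pos_onePow (k' + 1)) (pos_onePow (k' + 1)) (.inl w)))
  | .inl (.inr e) => e.elim
  | .inr (.inl q) => Sum.elim (fun w' => .inl (.inl w')) (fun _ => .inr (.inr ()))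
      (fwdP E (pos_onePow (k' + 1)) (pos_onePow (k' + 1)) q)
  | .inr (.inr _) =>
      .inr (.inl (bwdP E (pos_onePow (k' + 1)) (pos_onePow (k' + 1)) (.inr ())))

lemma thMate_A (w : VarsOf (onePow k')) :
    thMate E (.inl (.inl w)) =
      .inr (.inl (bwdP E (pos_onePow (k' + 1)) (pos_onePow (k' + 1)) (.inl w))) := rfl

lemma thMate_C (q : VarsOf (onePow (k' + 1))) :
    thMate E (.inr (.inl q)) = Sum.elim (fun w' => .inl (.inl w'))
      (fun _ => .inr (.inr ())) (fwdP E (pos_onePow (k' + 1)) (pos_onePow (k' + 1)) q) := rfl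

lemma thMate_D (u : VarsOf Shape.one) :
    thMate E (.inr (.inr u)) =
      .inr (.inl (bwdP E (pos_onePow (k' + 1)) (pos_onePow (k' + 1)) (.inr ()))) := rfl

/-- The graph of `θ_p`. -/
noncomputable def thetaG (E : KMGraph (onePow (k' + 1)) (onePow (k' + 1))) :
    KMGraph (.hom (onePow k') .unit) (Xm (k' + 1)) where
  mate := thMate E
  invol := by
    rintro ((w | e) | (q | u))
    · erw [thMate_A, thMate_C, fwdP_bwdP]
      rfl
    · exact e.elim
    · rcases hq : fwdP E (pos_onePow (k' + 1)) (pos_onePow (k' + 1)) q with w' | u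
      · rw [thMate_C, hq]
        show thMate E (.inl (.inl w')) = _
        rw [thMate_A, ← hq, bwdP_fwdP]
      · have hq' : fwdP E (pos_onePow (k' + 1)) (pos_onePow (k' + 1)) q = Sum.inr () := hq
        rw [thMate_C, hq']
        show thMate E (.inr (.inr ())) = _
        erw [thMate_D, ← hq', bwdP_fwdP]
    · erw [thMate_D, thMate_C, fwdP_bwdP]
      rfl
  nofix := by
    rintro ((w | e) | (q | u)) h
    · rw [thMate_A] at h; simp at h
    · exact e.elim
    · rcases hq : fwdP E (pos_onePow (k' + 1)) (pos_onePow (k' + 1)) q with w' | u <;>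
        rw [thMate_C, hq] at h <;> cases h
    · rw [thMate_D] at h; cases h
  sflip := by
    rintro ((w | e) | (q | u))
    · rw [thMate_A]; simp [tsgn, Xm, sgn, Sum.elim]
    · exact e.elim
    · rcases hq : fwdP E (pos_onePow (k' + 1)) (pos_onePow (k' + 1)) q with w' | u <;>
        rw [thMate_C, hq] <;> simp [tsgn, Xm, sgn, Sum.elim]
    · rw [thMate_D]; simp [tsgn, Xm, sgn, Sum.elim]

lemma thetaG_mate : (thetaG E).mate = thMate E := rfl

lemma isComposite_theta :
    IsComposite (thetaLastG (onePow k') (pos_onePow k')) (homG E (idG .one)) (thetaG E) := by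
  have hp := pos_onePow (k' + 1)
  rintro ((w | e) | (q | ⟨⟩))
  · refine .head (Or.inl ⟨.inl (.inl w), rfl, rfl⟩) ?_
    refine .head (Or.inr ⟨.inl (.inl (.inl w)), rfl, rfl⟩) ?_
    have h2 : (homG E (idG Shape.one)).mate (.inl (.inl (.inl w))) =
        .inr (.inl (bwdP E (pos_onePow (k' + 1)) (pos_onePow (k' + 1)) (.inl w))) := by
      show hlf _ _ _ _ (E.mate (.inr (.inl w))) = _
      erw [bwdP_spec]
      rfl
    erw [h2]
    exact .refl
  · exact e.elim
  · rcases hq : fwdP E (pos_onePow (k' + 1)) (pos_onePow (k' + 1)) q with w' | ⟨⟩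
    · have h1 : (homG E (idG Shape.one)).mate (.inr (.inl q)) = .inl (.inl (.inl w')) := by
        show hlf _ _ _ _ (E.mate (.inl q)) = _
        rw [fwdP_spec E (pos_onePow (k' + 1)) (pos_onePow (k' + 1)) q, hq]
        rfl
      have ht : (thetaG E).mate (.inr (.inl q)) = .inl (.inl w') := by
        rw [thetaG_mate, thMate_C, hq]
        rfl
      erw [ht]
      refine .head (Or.inr ⟨.inr (.inl q), rfl, rfl⟩) ?_
      erw [h1]
      exact .head (Or.inl ⟨.inr (.inl (.inl w')), rfl, rfl⟩) .refl
    · have h1 : (homG E (idG Shape.one)).mate (.inr (.inl q)) = .inl (.inl (.inr ())) := by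
        show hlf _ _ _ _ (E.mate (.inl q)) = _
        rw [fwdP_spec E (pos_onePow (k' + 1)) (pos_onePow (k' + 1)) q, hq]
        rfl
      have ht : (thetaG E).mate (.inr (.inl q)) = .inr (.inr ()) := by
        rw [thetaG_mate, thMate_C, hq]
        rfl
      erw [ht]
      refine .head (Or.inr ⟨.inr (.inl q), rfl, rfl⟩) ?_
      erw [h1]
      refine .head (Or.inl ⟨.inr (.inl (.inr ())), rfl, rfl⟩) ?_
      exact .head (Or.inr ⟨.inl (.inr ()), rfl, rfl⟩) .refl
  · refine .head (Or.inr ⟨.inr (.inr ()), rfl, rfl⟩) ?_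
    refine .head (Or.inl ⟨.inr (.inr ()), rfl, rfl⟩) ?_
    refine .head (Or.inr ⟨.inl (.inl (.inr ())), rfl, rfl⟩) ?_
    have h3 : (homG E (idG Shape.one)).mate (.inl (.inl (.inr ()))) =
        .inr (.inl (bwdP E (pos_onePow (k' + 1)) (pos_onePow (k' + 1)) (.inr ()))) := by
      show hlf _ _ _ _ (E.mate (.inr (.inr ()))) = _
      erw [bwdP_spec]
      rfl
    erw [h3]
    exact .refl

lemma allowable_thetaG (hE : Allowable E) : Allowable (thetaG E) :=
  Allowable.comp (allowable_thetaLastG (onePow k') (pos_onePow k'))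
    (Allowable.homc hE (Allowable.id .one)) (isComposite_theta E)

end Theta

/-- writing `X_k = [A₁ ⊗ ⋯ ⊗ A_k, A]` (`k = k' + 1` here) and given
`p`, there is an allowable morphism `θ_p : [A₁ ⊗ ⋯ ⊗ A_{p−1} ⊗ A_{p+1} ⊗ ⋯ ⊗ A_k, I] → X_k`
pairing `A` with `A_p` and each `Aᵢ` (`i ≠ p`) of the domain with `Aᵢ` of the codomain. -/
theorem theta_allowable (k' : ℕ) (p : Fin (k' + 1)) :
    ∃ θ : KMGraph (.hom (onePow k') .unit) (Xm (k' + 1)),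
      Allowable θ ∧
      -- the mate of A is A_p
      θ.mate (Sum.inr (Sum.inr ())) = Sum.inr (Sum.inl (powVar (k' + 1) p)) ∧
      -- the i-th variable of the domain is paired with the corresponding variable (skipping p)
      (∀ i : Fin k', θ.mate (Sum.inl (Sum.inl (powVar k' i)))
          = Sum.inr (Sum.inl (powVar (k' + 1) (p.succAbove i)))) := by
  obtain ⟨E, hE, hp, hi⟩ := moveToLast k' p
  refine ⟨thetaG E, allowable_thetaG E hE, ?_, ?_⟩
  · show thMate E (.inr (.inr ())) = _
    erw [thMate_D, bwdP_eq E (pos_onePow (k' + 1)) (pos_onePow (k' + 1))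
      (show E.mate (.inl (powVar (k' + 1) p)) = .inr (.inr ()) by rw [hp, powVar_last]; rfl)]
    rfl
  · intro i
    show thMate E (.inl (.inl (powVar k' i))) = _
    erw [thMate_A, bwdP_eq E (pos_onePow (k' + 1)) (pos_onePow (k' + 1))
      (show E.mate (.inl (powVar (k' + 1) (p.succAbove i))) = .inr (.inl (powVar k' i)) by
        rw [hi i, powVar_castSucc])]
    rfl

end KM
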